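/- For all positive integers m, n and every real number ε > 0 there exists δ > 0 such that the following holds. Let P_0, P_1, …, P_m ∈ ℤ^m be any affinely independent points such that 0 lies in the interior of the simplex Δ = conv{P_0, …, P_m}, and let N be any additive subgroup of ℝ^m × ℝ^n containing ℤ^{m+n}. If every nonzero element (q, y) ∈ N with y_l ≥ 0 for all l ∈ {1, …, n} satisfies gauge Δ q + Σ_{l=1}^n y_l > ε, then every nonzero element A ∈ π(N) with A_l ≥ 0 for all l satisfies Σ_{l=1}^n A_l > δ, where π : ℝ^m × ℝ^n → ℝ^n is the projection to the last n coordinates. -/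

import Mathlib

open Finset Set


section Helpers

lemma fract_le_self_of_nonneg {x : ℝ} (hx : 0 ≤ x) : Int.fract x ≤ x := by
  have h0 : (0:ℤ) ≤ ⌊x⌋ := Int.floor_nonneg.2 hx
  have h1 : (0:ℝ) ≤ (⌊x⌋ : ℝ) := by exact_mod_cast h0
  have h2 := Int.floor_add_fract x
  linarith

lemma abs_sub_lt_of_floor_div_eq {x y w : ℝ} (hw : 0 < w) (h : ⌊x / w⌋ = ⌊y / w⌋) :
    |x - y| < w := by
  have h1 := Int.floor_le (x / w)
  have h2 := Int.lt_floor_add_one (x / w)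
  have h3 := Int.floor_le (y / w)
  have h4 := Int.lt_floor_add_one (y / w)
  rw [h] at h1 h2
  have hx : x = x / w * w := (div_mul_cancel₀ x hw.ne').symm
  have hy : y = y / w * w := (div_mul_cancel₀ y hw.ne').symm
  rw [abs_sub_lt_iff]
  constructor <;> nlinarith

lemma floor_div_toNat_lt {x w : ℝ} (hw : 0 < w) (h1 : x < 1) {Q : ℕ}
    (hQ : 1 / w ≤ Q) (hQ0 : Q ≠ 0) : (⌊x / w⌋).toNat < Q := by
  rw [Int.toNat_lt' (Nat.pos_of_ne_zero hQ0)]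
  apply Int.floor_lt.2
  calc x / w < 1 / w := by gcongr
      _ ≤ Q := hQ

lemma gauge_sum_le' {E : Type*} [AddCommGroup E] [Module ℝ E] (s : Set E)
    (hconv : Convex ℝ s) (habs : Absorbent ℝ s)
    {ι : Type*} (t : Finset ι) (f : ι → E) :
    gauge s (∑ i ∈ t, f i) ≤ ∑ i ∈ t, gauge s (f i) :=
  Finset.le_sum_of_subadditive (gauge s) gauge_zero.le (fun x y => gauge_add_le hconv habs x y) t f

end Helpers

lemma fract_le_self_of_nonneg' {x : ℝ} (hx : 0 ≤ x) : Int.fract x ≤ x := by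
  have h0 : (0:ℤ) ≤ ⌊x⌋ := Int.floor_nonneg.2 hx
  have h1 : (0:ℝ) ≤ (⌊x⌋ : ℝ) := by exact_mod_cast h0
  have h2 := Int.floor_add_fract x
  linarith

lemma abs_sub_lt_of_floor_div_eq' {x y w : ℝ} (hw : 0 < w) (h : ⌊x / w⌋ = ⌊y / w⌋) :
    |x - y| < w := by
  have h1 := Int.floor_le (x / w)
  have h2 := Int.lt_floor_add_one (x / w)
  have h3 := Int.floor_le (y / w)
  have h4 := Int.lt_floor_add_one (y / w)
  rw [h] at h1 h2
  have hx : x = x / w * w := (div_mul_cancel₀ x hw.ne').symm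
  have hy : y = y / w * w := (div_mul_cancel₀ y hw.ne').symm
  rw [abs_sub_lt_iff]
  constructor <;> nlinarith

lemma floor_div_toNat_lt' {x w : ℝ} (hw : 0 < w) (h1 : x < 1) {Q : ℕ}
    (hQ : 1 / w ≤ Q) (hQ0 : Q ≠ 0) : (⌊x / w⌋).toNat < Q := by
  rw [Int.toNat_lt' (Nat.pos_of_ne_zero hQ0)]
  apply Int.floor_lt.2
  calc x / w < 1 / w := by gcongr
    _ ≤ Q := hQ

set_option maxHeartbeats 1000000 in
/-- Comparable case. -/
lemma comparable_case {ι : Type*} [DecidableEq ι] (ε' M κ : ℝ) (r : ℕ)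
    (hε0 : 0 < ε') (hε1 : ε' ≤ 1) (hM : 1 ≤ M) (hκ0 : 0 < κ)
    (s : Finset ι) (hcard : s.card ≤ r) (γ : ι → ℝ)
    (hlo : ∀ i ∈ s, κ ≤ γ i) (hhi : ∀ i ∈ s, γ i ≤ 1) :
    ∃ c : ℝ, M ≤ c ∧
      c ≤ ((⌈M⌉₊ + 1 : ℕ) : ℝ) * ((⌈4 / (κ * ε')⌉₊ : ℕ) : ℝ) ^ r + 1 ∧
      ∀ i ∈ s, Int.fract (c * γ i) ≤ ε' := by
  set w : ℝ := κ * ε' / 4 with hw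
  have hw0 : 0 < w := by positivity
  set Q : ℕ := ⌈4 / (κ * ε')⌉₊ with hQ
  have hQw : 1 / w ≤ (Q : ℝ) := by
    rw [hw]
    have : (1:ℝ) / (κ * ε' / 4) = 4 / (κ * ε') := by field_simp
    rw [this]
    exact Nat.le_ceil _
  have hQ0 : Q ≠ 0 := by
    have : (0:ℝ) < 1 / w := by positivity
    intro h
    rw [h] at hQw
    norm_num at hQw
    linarith
  set S : ℕ := ⌈M⌉₊ + 1 with hS
  have hSM : M ≤ (S : ℝ) := by
    push_cast [hS]
    have := Nat.le_ceil M
    linarith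
  have hS1 : 1 ≤ S := by omega
  clear_value w Q S
  -- pigeonhole
  set F : ℕ → (↑s → Fin Q) := fun j i =>
    ⟨(⌊Int.fract (((j * S : ℕ) : ℝ) * γ i) / w⌋).toNat,
      floor_div_toNat_lt' hw0 (Int.fract_lt_one _) hQw hQ0⟩ with hF
  have hcards : (Finset.univ : Finset (↑s → Fin Q)).card < (Finset.range (Q ^ r + 1)).card := by
    rw [Finset.card_univ, Finset.card_range]
    have h1 : Fintype.card (↑s → Fin Q) = Q ^ s.card := by
      rw [Fintype.card_fun, Fintype.card_fin, Fintype.card_coe]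
    rw [h1]
    have : Q ^ s.card ≤ Q ^ r := Nat.pow_le_pow_right (Nat.pos_of_ne_zero hQ0) hcard
    omega
  obtain ⟨a, ha, b, hb, hab, hFab⟩ :=
    Finset.exists_ne_map_eq_of_card_lt_of_maps_to hcards (f := F) (fun x _ => Finset.mem_univ _)
  -- wlog a < b
  wlog hlt : a < b generalizing a b
  · exact this b hb a ha hab.symm hFab.symm (by omega)
  -- main construction
  set k : ℕ := (b - a) * S with hk
  set c : ℝ := (k : ℝ) + ε' / 2 with hc
  clear_value k c
  have hka : (k : ℝ) = ((b * S : ℕ) : ℝ) - ((a * S : ℕ) : ℝ) := by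
    rw [hk]
    push_cast [Nat.cast_sub hlt.le]
    ring
  refine ⟨c, ?_, ?_, ?_⟩
  · -- M ≤ c
    have hk1 : S ≤ k := by
      rw [hk]
      have : 1 ≤ b - a := by omega
      calc S = 1 * S := (one_mul S).symm
        _ ≤ (b - a) * S := Nat.mul_le_mul_right S this
    have : (S:ℝ) ≤ (k:ℝ) := by exact_mod_cast hk1
    rw [hc]; linarith [hε0]
  · -- upper bound
    have hbQ : b ≤ Q ^ r := by
      have := Finset.mem_range.1 hb; omega
    have hkb : k ≤ Q ^ r * S := by
      rw [hk]
      exact Nat.mul_le_mul_right S (by omega)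
    have h1 : (k : ℝ) ≤ ((Q:ℝ)) ^ r * (S:ℝ) := by exact_mod_cast hkb
    have h2 : (S : ℝ) ≤ ((⌈M⌉₊ + 1 : ℕ) : ℝ) := by rw [hS]
    rw [hc]
    have hQr : (0:ℝ) ≤ (Q:ℝ)^r := by positivity
    nlinarith [hε1, hε0]
  · -- fractional parts
    intro i his
    set i' : ↑s := ⟨i, his⟩ with hi'
    have hfloor_eq : ⌊Int.fract (((b * S : ℕ) : ℝ) * γ i) / w⌋
        = ⌊Int.fract (((a * S : ℕ) : ℝ) * γ i) / w⌋ := by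
      have h1 : (F b i') = (F a i') := by rw [hFab]
      have h2 := congrArg (fun x : Fin Q => (x : ℕ)) h1
      simp only [hF] at h2
      change (⌊Int.fract (((b * S : ℕ) : ℝ) * γ i) / w⌋).toNat = (⌊Int.fract (((a * S : ℕ) : ℝ) * γ i) / w⌋).toNat at h2
      have hnn : ∀ j : ℕ, (0:ℤ) ≤ ⌊Int.fract (((j * S : ℕ) : ℝ) * γ i) / w⌋ := by
        intro j
        apply Int.floor_nonneg.2
        exact div_nonneg (Int.fract_nonneg _) hw0.le
      have := hnn a; have := hnn b
      omega
    have habs : |Int.fract (((b * S : ℕ) : ℝ) * γ i) - Int.fract (((a * S : ℕ) : ℝ) * γ i)| < w :=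
      abs_sub_lt_of_floor_div_eq' hw0 hfloor_eq
    have hγlo := hlo i his
    have hγhi := hhi i his
    have hκ1 : κ ≤ 1 := le_trans hγlo hγhi
    set X : ℝ := ((a * S : ℕ) : ℝ) * γ i with hX
    set Y : ℝ := ((b * S : ℕ) : ℝ) * γ i with hY
    set e : ℝ := Int.fract Y - Int.fract X with he
    set nn : ℤ := ⌊Y⌋ - ⌊X⌋ with hnn
    clear_value X Y e nn
    have he_lt : e < w := by linarith [(abs_lt.1 habs).2]
    have he_gt : -w < e := by linarith [(abs_lt.1 habs).1]
    have hYX : (k : ℝ) * γ i = (nn : ℝ) + e := by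
      have h1 := Int.floor_add_fract X
      have h2 := Int.floor_add_fract Y
      have h3 : Y - X = (k : ℝ) * γ i := by rw [hka, hX, hY]; ring
      rw [hnn, he]
      push_cast
      linarith only [h1, h2, h3]
    set g : ℝ := e + ε' / 2 * γ i with hg
    clear_value g
    have hprod1 : ε' / 2 * κ ≤ ε' / 2 * γ i := by nlinarith
    have hprod2 : ε' / 2 * γ i ≤ ε' / 2 := by nlinarith
    have hprodκ : κ * ε' ≤ ε' := by nlinarith
    have hg0 : 0 ≤ g := by rw [hg]; nlinarith [he_gt, hprod1]
    have hgε : g ≤ 3 * ε' / 4 := by rw [hg]; nlinarith [he_lt, hprod2]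
    have hg1 : g < 1 := by linarith only [hgε, hε1, hε0]
    have hcγ : c * γ i = (nn : ℝ) + g := by
      have hexp : c * γ i = (k : ℝ) * γ i + ε' / 2 * γ i := by rw [hc]; ring
      rw [hexp, hYX, hg]
      ring
    calc Int.fract (c * γ i) = Int.fract ((nn : ℝ) + g) := by rw [hcγ]
      _ = Int.fract g := by rw [Int.fract_intCast_add]
      _ = g := Int.fract_eq_self.2 ⟨hg0, hg1⟩
      _ ≤ ε' := by linarith only [hgε, hε0]

/-- One-sided simultaneous approximation: a uniform bound `K` (depending only on `r, ε', M`)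
such that for any at most `r` weights in `(0,1]` there is `c ∈ [M, K]` with all
fractional parts `{c γ i} ≤ ε'`. -/
lemma lemA {ι : Type*} [DecidableEq ι] (ε' M : ℝ) (hε0 : 0 < ε') (hε1 : ε' ≤ 1)
    (hM : 1 ≤ M) : ∀ r : ℕ, ∃ K : ℝ, M ≤ K ∧ ∀ (s : Finset ι) (γ : ι → ℝ), s.card ≤ r →
      (∀ i ∈ s, 0 < γ i) → (∀ i ∈ s, γ i ≤ 1) →
      ∃ c : ℝ, M ≤ c ∧ c ≤ K ∧ ∀ i ∈ s, Int.fract (c * γ i) ≤ ε' := by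
  intro r
  induction r with
  | zero =>
    refine ⟨M, le_refl M, fun s γ hc _ _ => ⟨M, le_refl M, le_refl M, ?_⟩⟩
    have hs : s = ∅ := Finset.card_eq_zero.1 (Nat.le_zero.1 hc)
    simp [hs]
  | succ r IH =>
    obtain ⟨K', hK'M, hK'⟩ := IH
    have hK'0 : 0 < K' := lt_of_lt_of_le one_pos (le_trans hM hK'M)
    set κ : ℝ := ε' / K' with hκ
    have hκ0 : 0 < κ := by positivity
    set B : ℝ := ((⌈M⌉₊ + 1 : ℕ) : ℝ) * ((⌈4 / (κ * ε')⌉₊ : ℕ) : ℝ) ^ (r + 1) + 1 with hB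
    refine ⟨max K' B, le_trans hK'M (le_max_left _ _), ?_⟩
    intro s γ hcard hpos hle
    by_cases hall : ∀ i ∈ s, κ ≤ γ i
    · obtain ⟨c, hcM, hcB, hc⟩ :=
        comparable_case ε' M κ (r + 1) hε0 hε1 hM hκ0 s hcard γ hall hle
      exact ⟨c, hcM, le_trans hcB (le_max_right _ _), hc⟩
    · push_neg at hall
      obtain ⟨i₀, hi₀s, hi₀⟩ := hall
      obtain ⟨c, hcM, hcK, hc⟩ := hK' (s.erase i₀) γ
        (by rw [Finset.card_erase_of_mem hi₀s]; omega)
        (fun i hi => hpos i (Finset.mem_of_mem_erase hi))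
        (fun i hi => hle i (Finset.mem_of_mem_erase hi))
      refine ⟨c, hcM, le_trans hcK (le_max_left _ _), ?_⟩
      intro i his
      by_cases hii : i = i₀
      · subst hii
        have h1 : 0 ≤ c * γ i := by
          have := hpos i his
          have : (0:ℝ) < c := lt_of_lt_of_le (lt_of_lt_of_le one_pos hM) hcM
          positivity
        have h2 : c * γ i < ε' := by
          have hγpos := hpos i his
          calc c * γ i ≤ K' * γ i := by
                apply mul_le_mul_of_nonneg_right hcK hγpos.le
            _ < K' * κ := by
                apply mul_lt_mul_of_pos_left hi₀ hK'0
            _ = ε' := by rw [hκ]; field_simp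
        exact le_trans (fract_le_self_of_nonneg' h1) h2.le
      · exact hc i (Finset.mem_erase.2 ⟨hii, his⟩)

/-- From `0` in the interior of the hull of an affinely independent family, get strictly
positive barycentric coordinates. -/
lemma exists_pos_barycentric {m : ℕ} (v : Fin (m + 1) → Fin m → ℝ)
    (hindep : AffineIndependent ℝ v)
    (hint : (0 : Fin m → ℝ) ∈ interior (convexHull ℝ (Set.range v))) :
    ∃ β : Fin (m + 1) → ℝ, (∀ j, 0 < β j) ∧ ∑ j, β j = 1 ∧ ∑ j, β j • v j = 0 := by
  have hmem : ∀ x ∈ convexHull ℝ (Set.range v), ∃ w : Fin (m + 1) → ℝ,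
      (∀ j, 0 ≤ w j) ∧ ∑ j, w j = 1 ∧ ∑ j, w j • v j = x := by
    intro x hx
    rw [convexHull_range_eq_exists_affineCombination] at hx
    obtain ⟨s, w, hw0, hw1, hwx⟩ := hx
    refine ⟨fun j => if j ∈ s then w j else 0, ?_, ?_, ?_⟩
    · intro j; by_cases h : j ∈ s <;> simp [h]
      exact hw0 j h
    · rw [Finset.sum_ite_mem, Finset.univ_inter, hw1]
    · have h1 : ∀ j : Fin (m + 1),
          (if j ∈ s then w j else 0) • v j = if j ∈ s then w j • v j else 0 := by
        intro j; by_cases h : j ∈ s <;> simp [h]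
      calc ∑ j, (if j ∈ s then w j else 0) • v j
          = ∑ j, if j ∈ s then w j • v j else 0 := by simp_rw [h1]
        _ = ∑ j ∈ s, w j • v j := by rw [Finset.sum_ite_mem, Finset.univ_inter]
        _ = x := by rw [← Finset.affineCombination_eq_linear_combination s v w hw1, hwx]
  obtain ⟨β, hβ0, hβ1, hβx⟩ := hmem 0 (interior_subset hint)
  refine ⟨β, ?_, hβ1, hβx⟩
  intro j
  rcases (hβ0 j).lt_or_eq with h | h
  · exact h
  exfalso
  -- β j = 0 leads to a contradiction
  have hj0 : β j = 0 := h.symm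
  obtain ⟨r, hr0, hball⟩ : ∃ r > 0, Metric.ball (0 : Fin m → ℝ) r ⊆ convexHull ℝ (Set.range v) := by
    rw [mem_interior_iff_mem_nhds] at hint
    exact Metric.mem_nhds_iff.1 hint
  set η : ℝ := r / (2 * (‖v j‖ + 1)) with hη
  have hη0 : 0 < η := by positivity
  have hpmem : (-η) • v j ∈ convexHull ℝ (Set.range v) := by
    apply hball
    rw [Metric.mem_ball, dist_zero_right, norm_smul]
    have h1 : ‖(-η : ℝ)‖ = η := by rw [norm_neg, Real.norm_of_nonneg hη0.le]
    rw [h1]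
    have h2 : ‖v j‖ < 2 * (‖v j‖ + 1) := by nlinarith [norm_nonneg (v j)]
    calc η * ‖v j‖ < η * (2 * (‖v j‖ + 1)) := by
          rcases (norm_nonneg (v j)).lt_or_eq with h3 | h3
          · exact mul_lt_mul_of_pos_left h2 hη0
          · rw [← h3] at h2 ⊢; exact mul_lt_mul_of_pos_left h2 hη0
      _ = r := by rw [hη]; field_simp
  obtain ⟨cc, hcc0, hcc1, hccx⟩ := hmem _ hpmem
  set c' : Fin (m + 1) → ℝ := fun i => (1 + η) * β i - if i = j then η else 0 with hc'
  have hc'sum : ∑ i, c' i = 1 := by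
    rw [hc']
    rw [Finset.sum_sub_distrib, ← Finset.mul_sum, hβ1, Finset.sum_ite_eq' Finset.univ j]
    simp
  have hc'x : ∑ i, c' i • v i = (-η) • v j := by
    rw [hc']
    have hsplit : ∀ i : Fin (m + 1), ((1 + η) * β i - if i = j then η else 0) • v i
        = (1 + η) • (β i • v i) - (if i = j then η • v j else 0) := by
      intro i
      by_cases h2 : i = j
      · subst h2; simp [sub_smul, mul_smul]
      · simp [h2, sub_smul, mul_smul]
    simp_rw [hsplit]
    rw [Finset.sum_sub_distrib, ← Finset.smul_sum, hβx, Finset.sum_ite_eq' Finset.univ j]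
    simp
  have heq := hindep.eq_of_sum_eq_sum (s := Finset.univ) (w₁ := cc) (w₂ := c')
    (by rw [hcc1, hc'sum]) (by rw [hccx, hc'x])
  have hj := heq j (Finset.mem_univ j)
  rw [hc'] at hj
  have hj' : cc j = -η := by
    simpa [hj0] using hj
  linarith [hcc0 j, hη0, hj'.ge, hj'.le]

set_option maxHeartbeats 2000000 in
/-- Combinatorial form of the main Theorem 1 (toric McKernan conjecture): for all `m, n, ε`
there is `δ > 0`, independent of the lattice simplex `Δ` and the lattice `N`, such that
`ε`-log terminality of `X` implies `δ`-log terminality of `Y`. -/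
theorem stmt_6 (m n : ℕ) (hm : 0 < m) (hn : 0 < n) (ε : ℝ) (hε : 0 < ε) :
    ∃ δ > (0 : ℝ),
      ∀ P : Fin (m + 1) → Fin m → ℤ,
        AffineIndependent ℝ (fun j => fun i => (P j i : ℝ)) →
        (0 : Fin m → ℝ) ∈ interior (convexHull ℝ (Set.range fun j => fun i => (P j i : ℝ))) →
        ∀ N : AddSubgroup ((Fin m → ℝ) × (Fin n → ℝ)),
          (∀ (a : Fin m → ℤ) (b : Fin n → ℤ),
            ((fun i => (a i : ℝ)), (fun i => (b i : ℝ))) ∈ N) →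
          (∀ p ∈ N, p ≠ 0 → (∀ l, 0 ≤ p.2 l) →
            ε < gauge (convexHull ℝ (Set.range fun j => fun i => (P j i : ℝ))) p.1 + ∑ l, p.2 l) →
          ∀ A : Fin n → ℝ, (∃ q, (q, A) ∈ N) → A ≠ 0 → (∀ l, 0 ≤ A l) → δ < ∑ l, A l := by
  have hm1 : (1:ℝ) ≤ (m:ℝ) := by exact_mod_cast hm
  set ε' : ℝ := min ε 1 / (m + 1) with hε'def
  have hε'0 : 0 < ε' := div_pos (lt_min hε one_pos) (by positivity)
  have hε'1 : ε' ≤ 1 := by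
    rw [hε'def, div_le_one (by positivity)]
    have h1 : min ε 1 ≤ 1 := min_le_right _ _
    linarith
  obtain ⟨K, hKM, hK⟩ := lemA (ι := Fin (m+1)) ε' ((m:ℝ) + 2) hε'0 hε'1 (by linarith) m
  have hK1 : (1:ℝ) ≤ K := le_trans (by linarith) hKM
  have hK0 : (0:ℝ) < K := by linarith
  set c₀ : ℝ := ε' / (((m:ℝ) + 1) * K) with hc₀def
  have hc₀0 : 0 < c₀ := div_pos hε'0 (by positivity)
  have hc₀1 : c₀ ≤ 1 := by
    rw [hc₀def, div_le_one (by positivity)]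
    nlinarith
  set G : ℝ := 1 / c₀ with hGdef
  have hG1 : (1:ℝ) ≤ G := by rw [hGdef, le_div_iff₀ hc₀0]; linarith
  have hG0 : (0:ℝ) < G := by linarith
  set Nb : ℕ := ⌈2 * (m:ℝ) * G / ε⌉₊ + 1 with hNbdef
  have hNb0 : 0 < Nb := Nat.succ_pos _
  have hNbpos : (0:ℝ) < (Nb:ℝ) := by exact_mod_cast hNb0
  have hNbR : 2 * (m:ℝ) * G / ε < (Nb:ℝ) := by
    rw [hNbdef]; push_cast
    linarith [Nat.le_ceil (2*(m:ℝ)*G/ε)]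
  set KP : ℕ := Nb ^ m with hKPdef
  have hKP0 : 0 < KP := Nat.pow_pos hNb0
  have hKPpos : (0:ℝ) < (KP:ℝ) := by exact_mod_cast hKP0
  refine ⟨ε / (2 * (KP:ℝ)), by positivity, ?_⟩
  intro P hindep hint NN hNmem hlt A hAex hAne hA0
  obtain ⟨q, hqA⟩ := hAex
  by_contra hcon
  push_neg at hcon
  set v : Fin (m+1) → Fin m → ℝ := fun j i => (P j i : ℝ) with hv
  set Δ : Set (Fin m → ℝ) := convexHull ℝ (Set.range v) with hΔ
  have hApos : 0 < ∑ l, A l := by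
    obtain ⟨l₀, hl₀⟩ : ∃ l, A l ≠ 0 := by
      by_contra hc; push_neg at hc; exact hAne (funext hc)
    have h1 : 0 < A l₀ := lt_of_le_of_ne (hA0 l₀) (Ne.symm hl₀)
    have h2 := Finset.single_le_sum (f := A) (fun i _ => hA0 i) (Finset.mem_univ l₀)
    linarith
  have hconv : Convex ℝ Δ := convex_convexHull ℝ _
  have habs : Absorbent ℝ Δ := absorbent_nhds_zero (mem_interior_iff_mem_nhds.1 hint)
  have hlat : ∀ a : Fin m → ℤ, (fun i => (a i : ℝ)) ≠ (0 : Fin m → ℝ) →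
      ε < gauge Δ (fun i => (a i : ℝ)) := by
    intro a ha
    have h1 := hlt ((fun i => (a i : ℝ)), (fun i => ((0 : Fin n → ℤ) i : ℝ))) (hNmem a 0)
      (by
        intro hc
        apply ha
        have h2 := congrArg Prod.fst hc
        simpa using h2)
      (by intro l; simp)
    simpa using h1
  obtain ⟨β, hβpos, hβsum, hβcomb⟩ := exists_pos_barycentric v hindep hint
  have hvmem : ∀ j, v j ∈ Δ := fun j => subset_convexHull ℝ _ (Set.mem_range_self j)
  have hconic : ∀ t : Fin (m+1) → ℝ, (∀ j, 0 ≤ t j) →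
      gauge Δ (∑ j, t j • v j) ≤ ∑ j, t j := by
    intro t ht
    calc gauge Δ (∑ j, t j • v j) ≤ ∑ j, gauge Δ (t j • v j) := gauge_sum_le' Δ hconv habs _ _
      _ ≤ ∑ j, t j := by
        apply Finset.sum_le_sum
        intro j _
        rw [gauge_smul_of_nonneg (ht j), smul_eq_mul]
        calc t j * gauge Δ (v j) ≤ t j * 1 :=
              mul_le_mul_of_nonneg_left (gauge_le_one_of_mem (hvmem j)) (ht j)
          _ = t j := mul_one _
  -- Step 3: all barycentric coordinates are bounded below by c₀
  have hβlow : ∀ j, c₀ ≤ β j := by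
    by_contra hcon2
    push_neg at hcon2
    obtain ⟨i₀, hi₀⟩ := hcon2
    obtain ⟨i₁, -, hi₁⟩ := Finset.exists_max_image Finset.univ β Finset.univ_nonempty
    have hmax : 1 / ((m:ℝ)+1) ≤ β i₁ := by
      by_contra hmc
      push_neg at hmc
      have hsum_lt : ∑ j, β j < 1 := by
        calc ∑ j, β j ≤ ∑ _j : Fin (m+1), β i₁ :=
              Finset.sum_le_sum (fun j _ => hi₁ j (Finset.mem_univ j))
          _ = ((m:ℝ)+1) * β i₁ := by
              rw [Finset.sum_const, Finset.card_univ, Fintype.card_fin]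
              push_cast; ring
          _ < ((m:ℝ)+1) * (1/((m:ℝ)+1)) := mul_lt_mul_of_pos_left hmc (by positivity)
          _ = 1 := by field_simp
      rw [hβsum] at hsum_lt; exact lt_irrefl 1 hsum_lt
    have hβi₁pos := hβpos i₁
    have hβi₁le1 : β i₁ ≤ 1 := by
      have h1 := Finset.single_le_sum (f := β) (fun j _ => (hβpos j).le) (Finset.mem_univ i₁)
      rw [hβsum] at h1; exact h1
    obtain ⟨ct, hctM, hctK, hct⟩ := hK (Finset.univ.erase i₀) (fun j => β j / β i₁)
      (by rw [Finset.card_erase_of_mem (Finset.mem_univ i₀), Finset.card_univ, Fintype.card_fin]; omega)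
      (fun j _ => div_pos (hβpos j) hβi₁pos)
      (fun j _ => by rw [div_le_one hβi₁pos]; exact hi₁ j (Finset.mem_univ j))
    have hct0 : 0 < ct := lt_of_lt_of_le (by positivity) hctM
    set c : ℝ := ct / β i₁ with hcdef
    clear_value c
    have hc_ge : (m:ℝ)+2 ≤ c := by
      rw [hcdef, le_div_iff₀ hβi₁pos]
      nlinarith
    have hcpos : 0 < c := by linarith
    have hc_le : c ≤ ((m:ℝ)+1) * K := by
      rw [hcdef, div_le_iff₀ hβi₁pos]
      have h1 : (1:ℝ) ≤ ((m:ℝ)+1) * β i₁ := by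
        calc (1:ℝ) = ((m:ℝ)+1) * (1/((m:ℝ)+1)) := by field_simp
          _ ≤ ((m:ℝ)+1) * β i₁ := mul_le_mul_of_nonneg_left hmax (by positivity)
      nlinarith
    have hfr : ∀ j, j ≠ i₀ → Int.fract (c * β j) ≤ ε' := by
      intro j hj
      have h1 := hct j (Finset.mem_erase.2 ⟨hj, Finset.mem_univ j⟩)
      have h2 : ct * (β j / β i₁) = c * β j := by
        rw [hcdef]; field_simp
      rwa [h2] at h1
    have hci₀lt : c * β i₀ < ε' := by
      calc c * β i₀ ≤ ((m:ℝ)+1)*K * β i₀ := mul_le_mul_of_nonneg_right hc_le (hβpos i₀).le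
        _ < ((m:ℝ)+1)*K * c₀ := mul_lt_mul_of_pos_left hi₀ (by positivity)
        _ = ε' := by rw [hc₀def]; field_simp
    have hci₀0 : 0 ≤ c * β i₀ := mul_nonneg hcpos.le (hβpos i₀).le
    have hfr₀ : Int.fract (c * β i₀) = c * β i₀ :=
      Int.fract_eq_self.2 ⟨hci₀0, lt_of_lt_of_le hci₀lt hε'1⟩
    set t : Fin (m+1) → ℝ := fun j => Int.fract (c * β j) with htdef
    have hzne : (∑ j, t j • v j) ≠ (0 : Fin m → ℝ) := by
      intro h0
      set lam : ℝ := ∑ j, t j with hlamdef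
      have hprop := hindep.eq_of_sum_eq_sum (s := Finset.univ) (w₁ := t)
        (w₂ := fun j => lam * β j)
        (by rw [← Finset.mul_sum, hβsum, mul_one])
        (by
          rw [h0]
          have h2 : ∑ j, (lam * β j) • v j = lam • ∑ j, β j • v j := by
            rw [Finset.smul_sum]
            apply Finset.sum_congr rfl
            intro j _
            rw [smul_smul]
          rw [h2, hβcomb, smul_zero])
      have h1 := hprop i₀ (Finset.mem_univ i₀)
      have ht₀ : t i₀ = c * β i₀ := hfr₀
      have hlamc : lam = c := by
        have h3 : c * β i₀ = lam * β i₀ := by rw [← ht₀]; exact h1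
        have h4 := mul_right_cancel₀ (hβpos i₀).ne' h3
        exact h4.symm
      have h2 := hprop i₁ (Finset.mem_univ i₁)
      have h3 : t i₁ < 1 := Int.fract_lt_one _
      rw [h2, hlamc] at h3
      have h3' : c * β i₁ < 1 := h3
      have h5 : ((m:ℝ)+2) * (1/((m:ℝ)+1)) ≤ c * β i₁ :=
        mul_le_mul hc_ge hmax (by positivity) (by linarith)
      have hgt1 : 1 < ((m:ℝ)+2) * (1/((m:ℝ)+1)) := by
        rw [mul_one_div, lt_div_iff₀ (by positivity)]
        linarith
      linarith
    set a : Fin m → ℤ := fun l => - ∑ j, ⌊c * β j⌋ * P j l with hadef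
    have hza : ((fun l => (a l : ℝ)) : Fin m → ℝ) = ∑ j, t j • v j := by
      funext l
      have hcomb' : ∑ j, β j * v j l = 0 := by
        have h2 := congrFun hβcomb l
        simpa [Finset.sum_apply] using h2
      have hRHS : (∑ j, t j • v j) l = ∑ j, (c * β j - (⌊c * β j⌋ : ℝ)) * v j l := by
        rw [Finset.sum_apply]
        apply Finset.sum_congr rfl
        intro j _
        rw [Pi.smul_apply, smul_eq_mul]
        show Int.fract (c * β j) * v j l = _
        rw [← Int.self_sub_floor]
      rw [hRHS]
      have hsplit : ∑ j, (c * β j - (⌊c * β j⌋ : ℝ)) * v j l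
          = c * (∑ j, β j * v j l) - ∑ j, (⌊c * β j⌋ : ℝ) * v j l := by
        rw [Finset.mul_sum, ← Finset.sum_sub_distrib]
        apply Finset.sum_congr rfl
        intro j _
        ring
      rw [hsplit, hcomb', mul_zero, zero_sub, hadef]
      push_cast
      rfl
    have hgz : gauge Δ (∑ j, t j • v j) ≤ ε := by
      calc gauge Δ (∑ j, t j • v j) ≤ ∑ j, t j := hconic t (fun j => Int.fract_nonneg _)
        _ ≤ ∑ _j : Fin (m+1), ε' := by
            apply Finset.sum_le_sum
            intro j _
            by_cases hj : j = i₀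
            · subst hj
              show Int.fract (c * β j) ≤ ε'
              rw [hfr₀]
              exact hci₀lt.le
            · exact hfr j hj
        _ = ((m:ℝ)+1) * ε' := by
            rw [Finset.sum_const, Finset.card_univ, Fintype.card_fin]
            push_cast; ring
        _ ≤ ε := by
            rw [hε'def]
            have h2 : ((m:ℝ)+1) * (min ε 1 / ((m:ℝ)+1)) = min ε 1 := by field_simp
            rw [h2]
            exact min_le_left _ _
    have hha := hlat a (by rw [hza]; exact hzne)
    rw [hza] at hha
    linarith
  -- basis from v ∘ succ
  haveI : Nonempty (Fin m) := ⟨⟨0, hm⟩⟩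
  have hlin : LinearIndependent ℝ (fun i : Fin m => v i.succ) := by
    rw [Fintype.linearIndependent_iff]
    intro g hg
    set σ : ℝ := ∑ i, g i with hσdef
    set wt : Fin (m+1) → ℝ := fun j => Fin.cases 0 g j - σ * β j with hwtdef
    have hwsum : ∑ j, wt j = 0 := by
      rw [hwtdef, Finset.sum_sub_distrib, Fin.sum_univ_succ]
      simp only [Fin.cases_zero, Fin.cases_succ]
      rw [← Finset.mul_sum, hβsum, mul_one, zero_add, hσdef, sub_self]
    have hwv : ∑ j, wt j • v j = 0 := by
      rw [hwtdef]
      have h2 : ∀ j : Fin (m+1), (Fin.cases 0 g j - σ * β j) • v j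
          = (Fin.cases 0 g j : ℝ) • v j - σ • (β j • v j) := by
        intro j; rw [sub_smul, smul_smul]
      simp_rw [h2]
      rw [Finset.sum_sub_distrib, ← Finset.smul_sum, hβcomb, smul_zero, sub_zero,
        Fin.sum_univ_succ]
      simp only [Fin.cases_zero, Fin.cases_succ, zero_smul, zero_add]
      exact hg
    have hall := affineIndependent_iff.1 hindep Finset.univ wt hwsum hwv
    have hσ0 : σ = 0 := by
      have h0 := hall 0 (Finset.mem_univ 0)
      rw [hwtdef] at h0
      simp only [Fin.cases_zero, zero_sub, neg_eq_zero] at h0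
      rcases mul_eq_zero.1 h0 with h | h
      · exact h
      · exact absurd h (hβpos 0).ne'
    intro i
    have hi := hall i.succ (Finset.mem_univ _)
    rw [hwtdef] at hi
    simp only [Fin.cases_succ, hσ0, zero_mul, sub_zero] at hi
    exact hi
  have hcardeq : Fintype.card (Fin m) = Module.finrank ℝ (Fin m → ℝ) := by
    rw [Module.finrank_fintype_fun_eq_card]
  let B := basisOfLinearIndependentOfCardEqFinrank hlin hcardeq
  have hB : ∀ i, B i = v i.succ := by
    intro i
    rw [coe_basisOfLinearIndependentOfCardEqFinrank]
  -- gauge of minus vertices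
  have hgneg : ∀ j, gauge Δ (-(v j)) ≤ G := by
    intro j
    have hid : -(v j) = ∑ i, (β i / β j - if i = j then 1 else 0) • v i := by
      have hsplit : ∀ i : Fin (m+1), (β i / β j - if i = j then 1 else 0) • v i
          = (1/β j) • (β i • v i) - (if i = j then v j else 0) := by
        intro i
        by_cases h2 : i = j
        · subst h2
          rw [if_pos rfl, if_pos rfl, sub_smul, smul_smul, one_smul]
          congr 2
          field_simp
        · rw [if_neg h2, if_neg h2, sub_zero, sub_zero, smul_smul]
          congr 1
          field_simp
      simp_rw [hsplit]
      rw [Finset.sum_sub_distrib, ← Finset.smul_sum, hβcomb, smul_zero, zero_sub,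
        Finset.sum_ite_eq' Finset.univ j, if_pos (Finset.mem_univ j)]
    rw [hid]
    refine le_trans (hconic _ ?_) ?_
    · intro i
      by_cases h2 : i = j
      · subst h2; simp [div_self (hβpos i).ne']
      · rw [if_neg h2, sub_zero]
        exact div_nonneg (hβpos i).le (hβpos j).le
    · rw [Finset.sum_sub_distrib, ← Finset.sum_div, hβsum,
        Finset.sum_ite_eq' Finset.univ j, if_pos (Finset.mem_univ j)]
      have h1 : 1/β j ≤ 1/c₀ := one_div_le_one_div_of_le hc₀0 (hβlow j)
      rw [hGdef]
      linarith
  -- cell-diameter bound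
  have hcell : ∀ d : Fin m → ℝ, (∀ i, |d i| ≤ 1/(Nb:ℝ)) →
      gauge Δ (∑ i, d i • v i.succ) ≤ ε/2 := by
    intro d hd
    have h1 : ∀ i : Fin m, gauge Δ (d i • v i.succ) ≤ |d i| * G := by
      intro i
      rcases le_or_gt 0 (d i) with h | h
      · rw [gauge_smul_of_nonneg h, smul_eq_mul, abs_of_nonneg h]
        exact mul_le_mul_of_nonneg_left (le_trans (gauge_le_one_of_mem (hvmem _)) hG1) h
      · have heq2 : d i • v i.succ = |d i| • (-(v i.succ)) := by
          rw [abs_of_neg h, smul_neg, neg_smul, neg_neg]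
        rw [heq2, gauge_smul_of_nonneg (abs_nonneg _), smul_eq_mul]
        exact mul_le_mul_of_nonneg_left (hgneg _) (abs_nonneg _)
    calc gauge Δ (∑ i, d i • v i.succ) ≤ ∑ i, gauge Δ (d i • v i.succ) :=
          gauge_sum_le' Δ hconv habs _ _
      _ ≤ ∑ i : Fin m, |d i| * G := Finset.sum_le_sum (fun i _ => h1 i)
      _ ≤ ∑ _i : Fin m, (1/(Nb:ℝ)) * G :=
          Finset.sum_le_sum (fun i _ => mul_le_mul_of_nonneg_right (hd i) hG0.le)
      _ = (m:ℝ) * ((1/(Nb:ℝ)) * G) := by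
          rw [Finset.sum_const, Finset.card_univ, Fintype.card_fin]
          simp
      _ ≤ ε/2 := by
          have h2 : (m:ℝ) * ((1/(Nb:ℝ)) * G) = (m:ℝ)*G/(Nb:ℝ) := by ring
          rw [h2, div_le_iff₀ hNbpos]
          have h3 : 2*(m:ℝ)*G < (Nb:ℝ)*ε := by
            rw [div_lt_iff₀ hε] at hNbR
            linarith
          linarith
  -- pigeonhole on the torus
  set τ : ℕ → Fin m → ℝ := fun k i => B.repr ((k:ℝ) • q) i with hτdef
  have hw0 : (0:ℝ) < 1/(Nb:ℝ) := by positivity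
  set F : ℕ → (Fin m → Fin Nb) := fun k i =>
    ⟨(⌊Int.fract (τ k i) / (1/(Nb:ℝ))⌋).toNat,
      floor_div_toNat_lt' hw0 (Int.fract_lt_one _) (by rw [one_div_one_div]) (by omega)⟩
    with hFdef
  have hcards2 : (Finset.univ : Finset (Fin m → Fin Nb)).card < (Finset.range (KP+1)).card := by
    rw [Finset.card_univ, Finset.card_range, Fintype.card_fun, Fintype.card_fin, Fintype.card_fin]
    omega
  obtain ⟨k₁, hk₁, k₂, hk₂, hk12, hFk⟩ :=
    Finset.exists_ne_map_eq_of_card_lt_of_maps_to hcards2 (f := F) (fun x _ => Finset.mem_univ _)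
  have key : ∀ ka kb : ℕ, kb ∈ Finset.range (KP+1) → ka < kb → F ka = F kb → False := by
    intro ka kb hkb hab hFeq
    set kk : ℕ := kb - ka with hkkdef
    clear_value kk
    have hkk1 : 1 ≤ kk := by omega
    have hkkKP : kk ≤ KP := by
      have h2 := Finset.mem_range.1 hkb; omega
    have hkkpos : (0:ℝ) < (kk:ℝ) := by exact_mod_cast hkk1
    have hkkKPR : (kk:ℝ) ≤ (KP:ℝ) := by exact_mod_cast hkkKP
    set d : Fin m → ℝ := fun i => Int.fract (τ kb i) - Int.fract (τ ka i) with hddef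
    set nn : Fin m → ℤ := fun i => ⌊τ kb i⌋ - ⌊τ ka i⌋ with hnndef
    have hdlt : ∀ i, |d i| ≤ 1/(Nb:ℝ) := by
      intro i
      apply le_of_lt
      apply abs_sub_lt_of_floor_div_eq' hw0
      have h1 := congrFun hFeq i
      have h2 := congrArg Fin.val h1
      simp only [hFdef] at h2
      have hnn1 : (0:ℤ) ≤ ⌊Int.fract (τ ka i) / (1/(Nb:ℝ))⌋ :=
        Int.floor_nonneg.2 (div_nonneg (Int.fract_nonneg _) hw0.le)
      have hnn2 : (0:ℤ) ≤ ⌊Int.fract (τ kb i) / (1/(Nb:ℝ))⌋ :=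
        Int.floor_nonneg.2 (div_nonneg (Int.fract_nonneg _) hw0.le)
      omega
    have hτdiff : ∀ i, τ kb i - τ ka i = τ kk i := by
      intro i
      have h2 : ((kb:ℝ)) • q - ((ka:ℝ)) • q = ((kk:ℝ)) • q := by
        rw [← sub_smul]
        congr 1
        rw [hkkdef]
        push_cast [Nat.cast_sub hab.le]
        ring
      simp only [hτdef]
      rw [← h2, map_sub]
      simp
    have hrepr : ((kk:ℝ)) • q = ∑ i, (τ kk i) • v i.succ := by
      have h2 := B.sum_repr (((kk:ℝ)) • q)
      rw [← h2]
      apply Finset.sum_congr rfl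
      intro i _
      rw [hB i]
    set zz : Fin m → ℤ := fun l => ∑ i, nn i * P i.succ l with hzzdef
    have hcastzz : ((fun l => (zz l : ℝ)) : Fin m → ℝ) = ∑ i : Fin m, ((nn i : ℝ)) • v i.succ := by
      funext l
      rw [hzzdef, Finset.sum_apply]
      push_cast
      apply Finset.sum_congr rfl
      intro i _
      rw [Pi.smul_apply, smul_eq_mul]
    have hdecomp : ((kk:ℝ)) • q - (fun l => ((zz l : ℝ))) = ∑ i, d i • v i.succ := by
      rw [hrepr, hcastzz, ← Finset.sum_sub_distrib]
      apply Finset.sum_congr rfl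
      intro i _
      rw [← sub_smul]
      congr 1
      have h2 := hτdiff i
      have h3 := Int.floor_add_fract (τ kb i)
      have h4 := Int.floor_add_fract (τ ka i)
      rw [hddef, hnndef]
      push_cast
      linarith
    have hmemN : (((kk:ℝ)) • q - (fun l => ((zz l : ℝ))), ((kk:ℝ)) • A) ∈ NN := by
      have h1 : (kk • ((q, A)) : (Fin m → ℝ) × (Fin n → ℝ)) ∈ NN :=
        AddSubgroup.nsmul_mem NN hqA kk
      have h2 := hNmem zz 0
      have h3 := AddSubgroup.sub_mem NN h1 h2
      have h4 : (kk • ((q, A)) : (Fin m → ℝ) × (Fin n → ℝ))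
          = (((kk:ℝ)) • q, ((kk:ℝ)) • A) := by
        rw [Prod.smul_def]
        rw [Nat.cast_smul_eq_nsmul ℝ kk q, Nat.cast_smul_eq_nsmul ℝ kk A]
      rw [h4] at h3
      have h5 : ((fun i => (((0 : Fin n → ℤ)) i : ℝ)) : Fin n → ℝ) = 0 := by
        funext i; simp
      rw [h5] at h3
      have h6 : (((kk:ℝ)) • q - (fun l => ((zz l : ℝ))), ((kk:ℝ)) • A)
          = ((((kk:ℝ)) • q, ((kk:ℝ)) • A) : (Fin m → ℝ) × (Fin n → ℝ))
            - ((fun l => ((zz l : ℝ))), (0 : Fin n → ℝ)) := by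
        rw [Prod.mk_sub_mk, sub_zero]
      rw [h6]
      exact h3
    have hp2 : ∀ l, (0:ℝ) ≤ (((kk:ℝ)) • A) l := by
      intro l
      rw [Pi.smul_apply, smul_eq_mul]
      exact mul_nonneg hkkpos.le (hA0 l)
    have hpne : ((((kk:ℝ)) • q - (fun l => ((zz l : ℝ))), ((kk:ℝ)) • A))
        ≠ (0 : (Fin m → ℝ) × (Fin n → ℝ)) := by
      intro hP0
      have h2 := congrArg Prod.snd hP0
      simp only at h2
      have h3 : ∑ l, (((kk:ℝ)) • A) l = 0 := by rw [h2]; simp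
      have h4 : ∑ l, (((kk:ℝ)) • A) l = (kk:ℝ) * ∑ l, A l := by
        rw [Finset.mul_sum]
        apply Finset.sum_congr rfl
        intro l _
        rw [Pi.smul_apply, smul_eq_mul]
      rw [h4] at h3
      nlinarith
    have hfin := hlt _ hmemN hpne hp2
    have hsum2 : ∑ l, (((kk:ℝ)) • A) l = (kk:ℝ) * ∑ l, A l := by
      rw [Finset.mul_sum]
      apply Finset.sum_congr rfl
      intro l _
      rw [Pi.smul_apply, smul_eq_mul]
    have hgauge2 : gauge Δ (((kk:ℝ)) • q - (fun l => ((zz l : ℝ)))) ≤ ε/2 := by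
      rw [hdecomp]
      exact hcell d hdlt
    have hsmall : (kk:ℝ) * ∑ l, A l ≤ ε/2 := by
      calc (kk:ℝ) * ∑ l, A l ≤ (KP:ℝ) * ∑ l, A l :=
            mul_le_mul_of_nonneg_right hkkKPR hApos.le
        _ ≤ (KP:ℝ) * (ε / (2 * (KP:ℝ))) := mul_le_mul_of_nonneg_left hcon hKPpos.le
        _ = ε/2 := by field_simp
    rw [hsum2] at hfin
    simp only at hfin
    linarith
  rcases (Ne.lt_or_gt hk12) with h | h
  · exact key k₁ k₂ hk₂ h hFk
  · exact key k₂ k₁ hk₁ h hFk.symm
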